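/- Let G be the group acting on C[[t_α, t_β, t_γ, t_δ]] generated by the 3-torus acting diagonally with weights (0,1,1), (0,1,−1), (0,−1,−1), (0,−1,1), the involution swapping t_β and t_δ and fixing t_α, t_γ, and the order-4 substitution t_α ↦ −t_β, t_β ↦ t_γ, t_γ ↦ t_δ, t_δ ↦ −t_α. Then the ring of G-invariants equals C[[t_α·t_β·t_γ·t_δ, t_α·t_γ − t_β·t_δ]], a formal power series ring in 2 indeterminates. -/

import Mathlib

noncomputable section

/-- `ℂ[[t_α, t_β, t_γ, t_δ]]`, with `0,1,2,3 ↦ α,β,γ,δ`. -/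
abbrev PS4 : Type := MvPowerSeries (Fin 4) ℂ

/-- The weights `(0,1,1), (0,1,−1), (0,−1,−1), (0,−1,1)` of `t_α,t_β,t_γ,t_δ`. -/
def w13 : Fin 4 → Fin 3 → ℤ := ![![0,1,1], ![0,1,-1], ![0,-1,-1], ![0,-1,1]]

/-- The diagonal action of the torus `(ℂ*)³` on `ℂ[[t_α,t_β,t_γ,t_δ]]`. -/
def actT (lam : Fin 3 → ℂˣ) (f : PS4) : PS4 :=
  fun d : Fin 4 →₀ ℕ =>
    (∏ j : Fin 3, (lam j : ℂ) ^ (∑ i : Fin 4, (d i : ℤ) * w13 i j)) *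
      MvPowerSeries.coeff d f

/-- The involution swapping `t_β` and `t_δ` and fixing `t_α, t_γ`. -/
def actG2 (f : PS4) : PS4 :=
  fun d : Fin 4 →₀ ℕ =>
    MvPowerSeries.coeff (Finsupp.equivMapDomain (Equiv.swap (1 : Fin 4) 3) d) f

/-- The order-4 substitution `t_α ↦ −t_β, t_β ↦ t_γ, t_γ ↦ t_δ, t_δ ↦ −t_α`. -/
def actG3 (f : PS4) : PS4 :=
  fun d : Fin 4 →₀ ℕ =>
    (-1 : ℂ) ^ (d 0 + d 1) *
      MvPowerSeries.coeff (Finsupp.equivMapDomain (finRotate 4).symm d) f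

open MvPowerSeries Finset

/-- exponent (a,b) in Fin 2 -/
def E2 (a b : ℕ) : Fin 2 →₀ ℕ := Finsupp.equivFunOnFinite.symm ![a, b]

/-- exponent (a,b,a,b) in Fin 4 -/
def E4 (a b : ℕ) : Fin 4 →₀ ℕ := Finsupp.equivFunOnFinite.symm ![a, b, a, b]

@[simp] lemma E2_apply (a b : ℕ) (i : Fin 2) : E2 a b i = ![a, b] i := rfl
@[simp] lemma E4_apply (a b : ℕ) (i : Fin 4) : E4 a b i = ![a, b, a, b] i := rfl

lemma E2_inj {a b c d : ℕ} (h : E2 a b = E2 c d) : a = c ∧ b = d := by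
  constructor
  · have := DFunLike.congr_fun h 0; simpa using this
  · have := DFunLike.congr_fun h 1; simpa using this

lemma E4_inj {a b c d : ℕ} (h : E4 a b = E4 c d) : a = c ∧ b = d := by
  constructor
  · have := DFunLike.congr_fun h 0; simpa using this
  · have := DFunLike.congr_fun h 1; simpa using this

lemma eq_E2 (e : Fin 2 →₀ ℕ) : e = E2 (e 0) (e 1) := by
  ext i; fin_cases i <;> simp

lemma E4_add (a b c d : ℕ) : E4 a b + E4 c d = E4 (a + c) (b + d) := by
  ext i; fin_cases i <;> simp

lemma E4_smul (k a b : ℕ) : k • E4 a b = E4 (k * a) (k * b) := by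
  ext i; fin_cases i <;> simp

lemma E2_le_E2 {a b c d : ℕ} : E2 a b ≤ E2 c d ↔ a ≤ c ∧ b ≤ d := by
  constructor
  · intro h
    exact ⟨by simpa using h 0, by simpa using h 1⟩
  · intro ⟨h1, h2⟩ i
    fin_cases i <;> simpa

abbrev PS4' : Type := MvPowerSeries (Fin 4) ℂ

def Pm : PS4' := MvPowerSeries.X 0 * MvPowerSeries.X 1 * MvPowerSeries.X 2 * MvPowerSeries.X 3
def Qm : PS4' := MvPowerSeries.X 0 * MvPowerSeries.X 2 - MvPowerSeries.X 1 * MvPowerSeries.X 3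

lemma monomial_pow4 (e : Fin 4 →₀ ℕ) (c : ℂ) (k : ℕ) :
    (MvPowerSeries.monomial e c) ^ k = MvPowerSeries.monomial (k • e) (c ^ k) := by
  induction k with
  | zero => simp [MvPowerSeries.monomial_zero_one]
  | succ k ih =>
      rw [pow_succ, ih, MvPowerSeries.monomial_mul_monomial, pow_succ, succ_nsmul]

lemma Pm_eq : Pm = MvPowerSeries.monomial (E4 1 1) 1 := by
  have h : E4 1 1 = Finsupp.single (0 : Fin 4) 1 + Finsupp.single 1 1 + Finsupp.single 2 1
      + Finsupp.single 3 1 := by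
    ext i; fin_cases i <;> simp
  rw [Pm, MvPowerSeries.X_def, MvPowerSeries.X_def, MvPowerSeries.X_def, MvPowerSeries.X_def,
    MvPowerSeries.monomial_mul_monomial, MvPowerSeries.monomial_mul_monomial,
    MvPowerSeries.monomial_mul_monomial, h]
  norm_num

lemma Qm_eq : Qm = MvPowerSeries.monomial (E4 1 0) 1 + MvPowerSeries.monomial (E4 0 1) (-1) := by
  have h1 : E4 1 0 = Finsupp.single (0 : Fin 4) 1 + Finsupp.single 2 1 := by
    ext i; fin_cases i <;> simp
  have h2 : E4 0 1 = Finsupp.single (1 : Fin 4) 1 + Finsupp.single 3 1 := by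
    ext i; fin_cases i <;> simp
  rw [Qm, MvPowerSeries.X_def, MvPowerSeries.X_def, MvPowerSeries.X_def, MvPowerSeries.X_def,
    MvPowerSeries.monomial_mul_monomial, MvPowerSeries.monomial_mul_monomial, h1, h2,
    sub_eq_add_neg, ← map_neg]
  norm_num

lemma PQ_pow (m n : ℕ) :
    Pm ^ m * Qm ^ n = ∑ k ∈ Finset.range (n + 1),
      MvPowerSeries.monomial (E4 (m + k) (m + n - k)) ((-1 : ℂ) ^ (n - k) * (n.choose k : ℂ)) := by
  rw [Pm_eq, Qm_eq, add_pow, Finset.mul_sum]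
  refine Finset.sum_congr rfl fun k hk => ?_
  have hkn : k ≤ n := Nat.lt_succ_iff.mp (Finset.mem_range.mp hk)
  rw [monomial_pow4, monomial_pow4, monomial_pow4, one_pow, one_pow]
  have hcast : ((n.choose k : ℕ) : PS4') = MvPowerSeries.monomial 0 ((n.choose k : ℂ)) := by
    rw [MvPowerSeries.monomial_zero_eq_C]
    push_cast [← MvPowerSeries.c_eq_algebraMap]
    rfl
  rw [hcast, MvPowerSeries.monomial_mul_monomial, MvPowerSeries.monomial_mul_monomial,
    MvPowerSeries.monomial_mul_monomial]
  congr 1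
  · rw [E4_smul, E4_smul, E4_smul, add_zero, E4_add, E4_add]
    have h1 : m * 1 + (k * 1 + (n - k) * 0) = m + k := by omega
    have h2 : m * 1 + (k * 0 + (n - k) * 1) = m + n - k := by omega
    rw [h1, h2]
  · ring

/-- the sign-binomial coefficient -/
def Sc (m a b : ℕ) : ℂ := (-1 : ℂ) ^ (b - m) * ((a + b - 2 * m).choose (a - m) : ℂ)

lemma coeff_PQ (m n : ℕ) (d : Fin 4 →₀ ℕ) :
    MvPowerSeries.coeff d (Pm ^ m * Qm ^ n) =
      ∑ k ∈ Finset.range (n + 1),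
        (if d = E4 (m + k) (m + n - k) then (-1 : ℂ) ^ (n - k) * (n.choose k : ℂ) else 0) := by
  rw [PQ_pow, map_sum]
  exact Finset.sum_congr rfl fun k _ => MvPowerSeries.coeff_monomial _ _ _

lemma coeff_PQ_ne_zero {m n : ℕ} {d : Fin 4 →₀ ℕ}
    (h : MvPowerSeries.coeff d (Pm ^ m * Qm ^ n) ≠ 0) :
    ∃ k ≤ n, d = E4 (m + k) (m + n - k) := by
  rw [coeff_PQ] at h
  obtain ⟨k, hk, hne⟩ := Finset.exists_ne_zero_of_sum_ne_zero h
  refine ⟨k, Nat.lt_succ_iff.mp (Finset.mem_range.mp hk), ?_⟩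
  by_contra hcon
  rw [if_neg hcon] at hne
  exact hne rfl

lemma deg_E4 (a b : ℕ) : ∑ i : Fin 4, E4 a b i = 2 * a + 2 * b := by
  rw [Fin.sum_univ_four]; simp; ring

lemma coeff_PQ_deg {m n : ℕ} {d : Fin 4 →₀ ℕ}
    (h : MvPowerSeries.coeff d (Pm ^ m * Qm ^ n) ≠ 0) :
    (d 0 = d 2 ∧ d 1 = d 3) ∧ ∑ i : Fin 4, d i = 4 * m + 2 * n := by
  obtain ⟨k, hk, rfl⟩ := coeff_PQ_ne_zero h
  refine ⟨⟨by simp, by simp⟩, ?_⟩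
  rw [deg_E4]; omega

lemma coeff_PQ_E4 (m n a b : ℕ) :
    MvPowerSeries.coeff (E4 a b) (Pm ^ m * Qm ^ n) =
      if m ≤ a ∧ m ≤ b ∧ a + b = 2 * m + n then (-1 : ℂ) ^ (b - m) * ((n.choose (a - m)) : ℂ)
      else 0 := by
  rw [coeff_PQ]
  by_cases hc : m ≤ a ∧ m ≤ b ∧ a + b = 2 * m + n
  · rw [if_pos hc]
    obtain ⟨h1, h2, h3⟩ := hc
    have hkn : a - m ≤ n := by omega
    rw [Finset.sum_eq_single (a - m)]
    · rw [if_pos (by congr 1 <;> omega)]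
      congr 2
      omega
    · intro k hk hne
      rw [if_neg]
      intro heq
      obtain ⟨e1, e2⟩ := E4_inj heq
      omega
    · intro habs
      exact absurd (Finset.mem_range.mpr (by omega)) habs
  · rw [if_neg hc]
    refine Finset.sum_eq_zero fun k hk => ?_
    rw [if_neg]
    intro heq
    obtain ⟨e1, e2⟩ := E4_inj heq
    have := Finset.mem_range.mp hk
    omega

def deg4 (d : Fin 4 →₀ ℕ) : ℕ := ∑ i : Fin 4, d i

def UU (d : Fin 4 →₀ ℕ) : Finset (Fin 2 →₀ ℕ) := Finset.Iic (E2 (deg4 d) (deg4 d))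

lemma mem_UU {d : Fin 4 →₀ ℕ} {e : Fin 2 →₀ ℕ} :
    e ∈ UU d ↔ e 0 ≤ deg4 d ∧ e 1 ≤ deg4 d := by
  rw [UU, Finset.mem_Iic]
  constructor
  · intro h
    exact ⟨by simpa using h 0, by simpa using h 1⟩
  · intro ⟨h1, h2⟩ i
    fin_cases i <;> simpa

def PhiFun (g : MvPowerSeries (Fin 2) ℂ) : PS4' :=
  fun d => ∑ e ∈ UU d, g e * MvPowerSeries.coeff d (Pm ^ (e 0) * Qm ^ (e 1))

lemma coeff_PhiFun (g : MvPowerSeries (Fin 2) ℂ) (d : Fin 4 →₀ ℕ) :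
    MvPowerSeries.coeff d (PhiFun g) =
      ∑ e ∈ UU d, g e * MvPowerSeries.coeff d (Pm ^ (e 0) * Qm ^ (e 1)) := rfl

lemma sum_eq_PhiFun (g : MvPowerSeries (Fin 2) ℂ) (d : Fin 4 →₀ ℕ) (T : Finset (Fin 2 →₀ ℕ))
    (hT : ∀ e, MvPowerSeries.coeff d (Pm ^ (e 0) * Qm ^ (e 1)) ≠ 0 → e ∈ T) :
    ∑ e ∈ T, g e * MvPowerSeries.coeff d (Pm ^ (e 0) * Qm ^ (e 1)) = PhiFun g d := by
  have hsub : ∀ e : Fin 2 →₀ ℕ, MvPowerSeries.coeff d (Pm ^ (e 0) * Qm ^ (e 1)) ≠ 0 →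
      e ∈ UU d := by
    intro e he
    obtain ⟨_, hdeg⟩ := coeff_PQ_deg he
    rw [mem_UU]
    simp only [deg4]
    constructor <;> omega
  have h1 : ∑ e ∈ T, g e * MvPowerSeries.coeff d (Pm ^ (e 0) * Qm ^ (e 1)) =
      ∑ e ∈ T ∪ UU d, g e * MvPowerSeries.coeff d (Pm ^ (e 0) * Qm ^ (e 1)) := by
    refine (Finset.sum_subset Finset.subset_union_left fun e _ heT => ?_)
    rcases eq_or_ne (MvPowerSeries.coeff d (Pm ^ (e 0) * Qm ^ (e 1))) 0 with h | h
    · rw [h, mul_zero]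
    · exact absurd (hT e h) heT
  have h2 : PhiFun g d =
      ∑ e ∈ T ∪ UU d, g e * MvPowerSeries.coeff d (Pm ^ (e 0) * Qm ^ (e 1)) := by
    refine (Finset.sum_subset Finset.subset_union_right fun e _ heU => ?_)
    rcases eq_or_ne (MvPowerSeries.coeff d (Pm ^ (e 0) * Qm ^ (e 1))) 0 with h | h
    · rw [h, mul_zero]
    · exact absurd (hsub e h) heU
  rw [h1, h2]

lemma PhiFun_C (c : ℂ) : PhiFun (MvPowerSeries.C (σ := Fin 2) (R := ℂ) c) = MvPowerSeries.C (σ := Fin 4) (R := ℂ) c := by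
  funext d
  have h0 : (0 : Fin 2 →₀ ℕ) ∈ UU d := by rw [mem_UU]; simp
  have : PhiFun (MvPowerSeries.C (σ := Fin 2) (R := ℂ) c) d = c * MvPowerSeries.coeff d 1 := by
    rw [PhiFun]
    rw [Finset.sum_eq_single_of_mem 0 h0]
    · simp only [Finsupp.coe_zero, Pi.zero_apply, pow_zero, mul_one]
      rw [show (MvPowerSeries.C (σ := Fin 2) (R := ℂ) c) (0 : Fin 2 →₀ ℕ) =
        MvPowerSeries.coeff 0 (MvPowerSeries.C (σ := Fin 2) (R := ℂ) c) from rfl,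
        MvPowerSeries.coeff_zero_C]
    · intro e _ hne
      have h2 : MvPowerSeries.coeff e (MvPowerSeries.C (σ := Fin 2) (R := ℂ) c) = 0 := by
        rw [MvPowerSeries.coeff_C, if_neg hne]
      rw [show (MvPowerSeries.C (σ := Fin 2) (R := ℂ) c) e =
        MvPowerSeries.coeff e (MvPowerSeries.C (σ := Fin 2) (R := ℂ) c) from rfl, h2, zero_mul]
  rw [this]
  rw [show (MvPowerSeries.C (σ := Fin 4) (R := ℂ) c) d = MvPowerSeries.coeff d (MvPowerSeries.C (σ := Fin 4) (R := ℂ) c)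
    from rfl, MvPowerSeries.coeff_one, MvPowerSeries.coeff_C]
  split <;> simp

lemma PhiFun_one : PhiFun 1 = 1 := by
  have := PhiFun_C 1
  rwa [map_one, map_one] at this

lemma PhiFun_add (g h : MvPowerSeries (Fin 2) ℂ) :
    PhiFun (g + h) = PhiFun g + PhiFun h := by
  funext d
  show ∑ e ∈ UU d, _ = PhiFun g d + PhiFun h d
  rw [PhiFun, PhiFun, ← Finset.sum_add_distrib]
  refine Finset.sum_congr rfl fun e _ => ?_
  show (g e + h e) * _ = _
  ring

lemma deg4_le_of_add {p q d : Fin 4 →₀ ℕ} (h : p + q = d) : deg4 p ≤ deg4 d := by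
  subst h
  rw [deg4, deg4]
  refine Finset.sum_le_sum fun i _ => ?_
  rw [Finsupp.add_apply]
  omega

lemma PhiFun_mul (g h : MvPowerSeries (Fin 2) ℂ) :
    PhiFun (g * h) = PhiFun g * PhiFun h := by
  classical
  funext d
  set F : (Fin 2 →₀ ℕ) × (Fin 2 →₀ ℕ) → ℂ := fun uv =>
    g uv.1 * h uv.2 *
      MvPowerSeries.coeff d (Pm ^ (uv.1 0 + uv.2 0) * Qm ^ (uv.1 1 + uv.2 1)) with hF
  -- LHS
  have hL : PhiFun (g * h) d = ∑ e ∈ UU d, ∑ uv ∈ Finset.HasAntidiagonal.antidiagonal e, F uv := by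
    rw [PhiFun]
    refine Finset.sum_congr rfl fun e _ => ?_
    have : g * h = g * h := rfl
    rw [show (g * h) e = MvPowerSeries.coeff e (g * h) from rfl, MvPowerSeries.coeff_mul,
      Finset.sum_mul]
    refine Finset.sum_congr rfl fun uv huv => ?_
    have he : uv.1 + uv.2 = e := Finset.HasAntidiagonal.mem_antidiagonal.mp huv
    rw [hF]
    simp only []
    rw [← he, Finsupp.add_apply, Finsupp.add_apply]
    rfl
  have hdisj : (↑(UU d) : Set (Fin 2 →₀ ℕ)).PairwiseDisjoint Finset.HasAntidiagonal.antidiagonal := by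
    intro e1 _ e2 _ hne
    simp only [Function.onFun]
    rw [Finset.disjoint_left]
    intro uv h1 h2
    exact hne ((Finset.HasAntidiagonal.mem_antidiagonal.mp h1).symm.trans (Finset.HasAntidiagonal.mem_antidiagonal.mp h2))
  have hL2 : PhiFun (g * h) d = ∑ uv ∈ (UU d).biUnion Finset.HasAntidiagonal.antidiagonal, F uv := by
    rw [hL, Finset.sum_biUnion hdisj]
  have hsub : (UU d).biUnion Finset.HasAntidiagonal.antidiagonal ⊆ UU d ×ˢ UU d := by
    intro uv huv
    obtain ⟨e, he, hmem⟩ := Finset.mem_biUnion.mp huv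
    have hsum : uv.1 + uv.2 = e := Finset.HasAntidiagonal.mem_antidiagonal.mp hmem
    rw [mem_UU] at he
    rw [Finset.mem_product, mem_UU, mem_UU]
    have h0 : uv.1 0 + uv.2 0 = e 0 := by rw [← hsum]; rfl
    have h1 : uv.1 1 + uv.2 1 = e 1 := by rw [← hsum]; rfl
    omega
  have hL3 : PhiFun (g * h) d = ∑ uv ∈ UU d ×ˢ UU d, F uv := by
    rw [hL2]
    refine Finset.sum_subset hsub fun uv hmem hnot => ?_
    rcases eq_or_ne (MvPowerSeries.coeff d (Pm ^ (uv.1 0 + uv.2 0) * Qm ^ (uv.1 1 + uv.2 1))) 0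
      with hc | hc
    · rw [hF]; simp only []; rw [hc, mul_zero]
    · exfalso
      obtain ⟨_, hdeg⟩ := coeff_PQ_deg hc
      refine hnot (Finset.mem_biUnion.mpr ⟨uv.1 + uv.2, ?_, Finset.HasAntidiagonal.mem_antidiagonal.mpr rfl⟩)
      rw [mem_UU]
      have h0 : (uv.1 + uv.2) 0 = uv.1 0 + uv.2 0 := rfl
      have h1 : (uv.1 + uv.2) 1 = uv.1 1 + uv.2 1 := rfl
      rw [h0, h1]
      simp only [deg4] at hdeg ⊢
      omega
  -- RHS
  have hR : (PhiFun g * PhiFun h) d = ∑ uv ∈ UU d ×ˢ UU d, F uv := by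
    rw [show (PhiFun g * PhiFun h) d = MvPowerSeries.coeff d (PhiFun g * PhiFun h) from rfl,
      MvPowerSeries.coeff_mul]
    have hext : ∀ pq ∈ Finset.HasAntidiagonal.antidiagonal d,
        MvPowerSeries.coeff pq.1 (PhiFun g) * MvPowerSeries.coeff pq.2 (PhiFun h) =
        ∑ uv ∈ UU d ×ˢ UU d,
          (g uv.1 * MvPowerSeries.coeff pq.1 (Pm ^ (uv.1 0) * Qm ^ (uv.1 1))) *
          (h uv.2 * MvPowerSeries.coeff pq.2 (Pm ^ (uv.2 0) * Qm ^ (uv.2 1))) := by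
      intro pq hpq
      have hd : pq.1 + pq.2 = d := Finset.HasAntidiagonal.mem_antidiagonal.mp hpq
      have e1 : MvPowerSeries.coeff pq.1 (PhiFun g) =
          ∑ u ∈ UU d, g u * MvPowerSeries.coeff pq.1 (Pm ^ (u 0) * Qm ^ (u 1)) := by
        rw [coeff_PhiFun]
        refine (Finset.sum_subset ?_ ?_)
        · intro u hu
          rw [mem_UU] at hu ⊢
          have := deg4_le_of_add hd
          omega
        · intro u _ hu
          rcases eq_or_ne (MvPowerSeries.coeff pq.1 (Pm ^ (u 0) * Qm ^ (u 1))) 0 with hc | hc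
          · rw [hc, mul_zero]
          · exfalso
            obtain ⟨_, hdeg⟩ := coeff_PQ_deg hc
            have h1 : deg4 pq.1 ≤ deg4 d := deg4_le_of_add hd
            rw [mem_UU] at hu
            simp only [deg4] at hdeg h1 hu
            omega
      have e2 : MvPowerSeries.coeff pq.2 (PhiFun h) =
          ∑ v ∈ UU d, h v * MvPowerSeries.coeff pq.2 (Pm ^ (v 0) * Qm ^ (v 1)) := by
        rw [coeff_PhiFun]
        have hd' : pq.2 + pq.1 = d := by rw [add_comm]; exact hd
        refine (Finset.sum_subset ?_ ?_)
        · intro u hu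
          rw [mem_UU] at hu ⊢
          have := deg4_le_of_add hd'
          omega
        · intro u _ hu
          rcases eq_or_ne (MvPowerSeries.coeff pq.2 (Pm ^ (u 0) * Qm ^ (u 1))) 0 with hc | hc
          · rw [hc, mul_zero]
          · exfalso
            obtain ⟨_, hdeg⟩ := coeff_PQ_deg hc
            have h1 : deg4 pq.2 ≤ deg4 d := deg4_le_of_add hd'
            rw [mem_UU] at hu
            simp only [deg4] at hdeg h1 hu
            omega
      rw [e1, e2, Finset.sum_mul_sum, ← Finset.sum_product']
    rw [Finset.sum_congr rfl hext, Finset.sum_comm]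
    refine Finset.sum_congr rfl fun uv _ => ?_
    have : ∑ pq ∈ Finset.HasAntidiagonal.antidiagonal d,
        (g uv.1 * MvPowerSeries.coeff pq.1 (Pm ^ (uv.1 0) * Qm ^ (uv.1 1))) *
        (h uv.2 * MvPowerSeries.coeff pq.2 (Pm ^ (uv.2 0) * Qm ^ (uv.2 1))) =
        g uv.1 * h uv.2 * ∑ pq ∈ Finset.HasAntidiagonal.antidiagonal d,
          MvPowerSeries.coeff pq.1 (Pm ^ (uv.1 0) * Qm ^ (uv.1 1)) *
          MvPowerSeries.coeff pq.2 (Pm ^ (uv.2 0) * Qm ^ (uv.2 1)) := by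
      rw [Finset.mul_sum]
      refine Finset.sum_congr rfl fun pq _ => by ring
    rw [this, ← MvPowerSeries.coeff_mul, hF]
    simp only []
    congr 2
    rw [pow_add, pow_add]
    ring
  rw [hL3, ← hR]

lemma PhiFun_zero : PhiFun 0 = 0 := by
  funext d
  rw [PhiFun]
  refine Finset.sum_eq_zero fun e _ => ?_
  show (0 : ℂ) * _ = 0
  ring

def Phi : MvPowerSeries (Fin 2) ℂ →ₐ[ℂ] PS4' where
  toFun := PhiFun
  map_one' := PhiFun_one
  map_mul' := PhiFun_mul
  map_zero' := PhiFun_zero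
  map_add' := PhiFun_add
  commutes' := fun c => by
    show PhiFun (algebraMap ℂ (MvPowerSeries (Fin 2) ℂ) c) = algebraMap ℂ PS4' c
    rw [MvPowerSeries.algebraMap_apply, MvPowerSeries.algebraMap_apply]
    simp only [Algebra.algebraMap_self, RingHom.id_apply]
    exact PhiFun_C c

lemma deg4_eq_zero {d : Fin 4 →₀ ℕ} (h : deg4 d = 0) : d = 0 := by
  ext i
  rw [deg4] at h
  have := Finset.sum_eq_zero_iff.mp h i (Finset.mem_univ i)
  simpa using this

lemma coeff_zero_Pm : MvPowerSeries.coeff 0 Pm = 0 := by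
  rw [Pm_eq, MvPowerSeries.coeff_monomial, if_neg]
  intro hcon
  have := DFunLike.congr_fun hcon 0
  simp at this

lemma coeff_zero_Qm : MvPowerSeries.coeff 0 Qm = 0 := by
  rw [Qm_eq, map_add, MvPowerSeries.coeff_monomial, MvPowerSeries.coeff_monomial, if_neg, if_neg]
  · simp
  · intro hcon; have := DFunLike.congr_fun hcon 1; simp at this
  · intro hcon; have := DFunLike.congr_fun hcon 0; simp at this

lemma PhiFun_X0 : PhiFun (MvPowerSeries.X 0) = Pm := by
  funext d
  rw [PhiFun]
  rw [Finset.sum_eq_single (Finsupp.single (0 : Fin 2) 1)]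
  · rw [← MvPowerSeries.coeff_apply (MvPowerSeries.X 0) (Finsupp.single 0 1),
      MvPowerSeries.coeff_X, if_pos rfl]
    simp only [Finsupp.single_eq_same, Finsupp.single_eq_of_ne (by decide : (1 : Fin 2) ≠ 0),
      pow_one, pow_zero, mul_one, one_mul]
    exact MvPowerSeries.coeff_apply Pm d
  · intro e _ hne
    rw [← MvPowerSeries.coeff_apply (MvPowerSeries.X 0) e, MvPowerSeries.coeff_X, if_neg hne,
      zero_mul]
  · intro hnot
    have : deg4 d = 0 := by
      by_contra hd
      refine hnot (mem_UU.mpr ⟨?_, ?_⟩)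
      · simp only [Finsupp.single_eq_same]; omega
      · simp
    rw [deg4_eq_zero this]
    simp only [Finsupp.single_eq_same, Finsupp.single_eq_of_ne (by decide : (1 : Fin 2) ≠ 0),
      pow_one, pow_zero, mul_one, one_mul]
    rw [coeff_zero_Pm, mul_zero]

lemma PhiFun_X1 : PhiFun (MvPowerSeries.X 1) = Qm := by
  funext d
  rw [PhiFun]
  rw [Finset.sum_eq_single (Finsupp.single (1 : Fin 2) 1)]
  · rw [← MvPowerSeries.coeff_apply (MvPowerSeries.X 1) (Finsupp.single 1 1),
      MvPowerSeries.coeff_X, if_pos rfl]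
    simp only [Finsupp.single_eq_same, Finsupp.single_eq_of_ne (by decide : (0 : Fin 2) ≠ 1),
      pow_one, pow_zero, mul_one, one_mul]
    exact MvPowerSeries.coeff_apply Qm d
  · intro e _ hne
    rw [← MvPowerSeries.coeff_apply (MvPowerSeries.X 1) e, MvPowerSeries.coeff_X, if_neg hne,
      zero_mul]
  · intro hnot
    have : deg4 d = 0 := by
      by_contra hd
      refine hnot (mem_UU.mpr ⟨?_, ?_⟩)
      · simp
      · simp only [Finsupp.single_eq_same]; omega
    rw [deg4_eq_zero this]
    simp only [Finsupp.single_eq_same, Finsupp.single_eq_of_ne (by decide : (0 : Fin 2) ≠ 1),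
      pow_one, pow_zero, mul_one, one_mul]
    rw [coeff_zero_Qm, mul_zero]

lemma PhiFun_formula (g : MvPowerSeries (Fin 2) ℂ) (a b : ℕ) :
    PhiFun g (E4 a b) =
      ∑ m ∈ Finset.range (min a b + 1), g (E2 m (a + b - 2 * m)) * Sc m a b := by
  classical
  have hinj : Set.InjOn (fun m => E2 m (a + b - 2 * m)) ↑(Finset.range (min a b + 1)) := by
    intro x _ y _ hxy
    exact (E2_inj hxy).1
  rw [← sum_eq_PhiFun g (E4 a b)
      ((Finset.range (min a b + 1)).image (fun m => E2 m (a + b - 2 * m)))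
      (fun e he => ?_)]
  · rw [Finset.sum_image (fun x hx y hy hxy => hinj hx hy hxy)]
    refine Finset.sum_congr rfl fun m hm => ?_
    have hm' : m ≤ min a b := Nat.lt_succ_iff.mp (Finset.mem_range.mp hm)
    have h0 : (E2 m (a + b - 2 * m)) 0 = m := by simp
    have h1 : (E2 m (a + b - 2 * m)) 1 = a + b - 2 * m := by simp
    rw [h0, h1, coeff_PQ_E4, if_pos ⟨by omega, by omega, by omega⟩]
    rw [Sc]
  · -- every nonzero-coefficient exponent is in the image
    rw [coeff_PQ_E4] at he
    by_cases hc : e 0 ≤ a ∧ e 0 ≤ b ∧ a + b = 2 * (e 0) + e 1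
    · refine Finset.mem_image.mpr ⟨e 0, Finset.mem_range.mpr (by omega), ?_⟩
      rw [show a + b - 2 * (e 0) = e 1 by omega]
      exact (eq_E2 e).symm
    · rw [if_neg hc] at he
      exact absurd rfl he

lemma Sc_symm {m a b : ℕ} (h1 : m ≤ a) (h2 : m ≤ b) : Sc m a b = (-1 : ℂ) ^ (a + b) * Sc m b a := by
  rw [Sc, Sc]
  have hch : (b + a - 2 * m).choose (b - m) = (a + b - 2 * m).choose (a - m) := by
    rw [show b + a - 2 * m = a + b - 2 * m by omega]
    rw [show b - m = (a + b - 2 * m) - (a - m) by omega]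
    exact Nat.choose_symm (by omega)
  rw [hch]
  have hsign : (-1 : ℂ) ^ (b - m) = (-1 : ℂ) ^ (a + b) * (-1 : ℂ) ^ (a - m) := by
    rw [← pow_add, show a + b = (b - m) + (a - m) + 2 * m by omega]
    rw [show (b - m) + (a - m) + 2 * m + (a - m) = (b - m) + 2 * (m + (a - m)) by omega]
    rw [pow_add, pow_mul]
    norm_num
  rw [hsign]
  ring

lemma PhiFun_symm (g : MvPowerSeries (Fin 2) ℂ) (a b : ℕ) :
    PhiFun g (E4 a b) = (-1 : ℂ) ^ (a + b) * PhiFun g (E4 b a) := by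
  rw [PhiFun_formula, PhiFun_formula, Finset.mul_sum]
  rw [min_comm b a]
  refine Finset.sum_congr rfl fun m hm => ?_
  have hm' : m ≤ min a b := Nat.lt_succ_iff.mp (Finset.mem_range.mp hm)
  rw [show b + a - 2 * m = a + b - 2 * m by omega,
    Sc_symm (le_trans hm' (min_le_left _ _)) (le_trans hm' (min_le_right _ _))]
  ring

lemma PhiFun_nonlattice (g : MvPowerSeries (Fin 2) ℂ) {d : Fin 4 →₀ ℕ}
    (h : ¬(d 0 = d 2 ∧ d 1 = d 3)) : PhiFun g d = 0 := by
  rw [PhiFun]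
  refine Finset.sum_eq_zero fun e _ => ?_
  rcases eq_or_ne (MvPowerSeries.coeff d (Pm ^ (e 0) * Qm ^ (e 1))) 0 with hc | hc
  · rw [hc, mul_zero]
  · exact absurd (coeff_PQ_deg hc).1 h

lemma PhiFun_eq_zero {u : MvPowerSeries (Fin 2) ℂ} (h : PhiFun u = 0) : u = 0 := by
  have aux : ∀ m n, u (E2 m n) = 0 := by
    intro m
    induction m using Nat.strong_induction_on with
    | _ m IH =>
      intro n
      have h0 : PhiFun u (E4 m (m + n)) = 0 := by rw [h]; rfl
      rw [PhiFun_formula, show min m (m + n) = m by omega, Finset.sum_range_succ] at h0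
      have hz : ∑ m' ∈ Finset.range m, u (E2 m' (m + (m + n) - 2 * m')) * Sc m' m (m + n) = 0 := by
        refine Finset.sum_eq_zero fun m' hm' => ?_
        rw [IH m' (Finset.mem_range.mp hm'), zero_mul]
      rw [hz, zero_add, show m + (m + n) - 2 * m = n by omega] at h0
      have hs : Sc m m (m + n) ≠ 0 := by
        rw [Sc, show m + (m + n) - 2 * m = n by omega, show m - m = 0 by omega,
          Nat.choose_zero_right]
        simp
      exact (mul_eq_zero.mp h0).resolve_right hs
  funext e
  rw [eq_E2 e, aux]
  rfl

lemma unit2_zpow_ne_one {s : ℤ} (hs : s ≠ 0) : (2 : ℂ) ^ s ≠ 1 := by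
  intro hcon
  have habs : ((2 : ℝ) ^ s : ℝ) = 1 := by
    have := congrArg (‖·‖) hcon
    rw [norm_zpow] at this
    simpa using this
  have hinj : Function.Injective (fun s : ℤ => (2 : ℝ) ^ s) :=
    zpow_right_injective₀ (by norm_num) (by norm_num)
  have : s = 0 := hinj (by simpa using habs)
  exact hs this

lemma lattice_eq {d : Fin 4 →₀ ℕ} (h1 : d 0 = d 2) (h2 : d 1 = d 3) : d = E4 (d 0) (d 1) := by
  ext i
  fin_cases i <;> simp <;> omega

lemma swap_E4 (d : Fin 4 →₀ ℕ) :
    Finsupp.equivMapDomain (Equiv.swap (1 : Fin 4) 3) d =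
      Finsupp.equivFunOnFinite.symm ![d 0, d 3, d 2, d 1] := by
  ext i
  rw [Finsupp.equivMapDomain_apply]
  fin_cases i <;> simp [Equiv.swap_apply_def] <;> rfl

lemma rot_E4 (d : Fin 4 →₀ ℕ) :
    Finsupp.equivMapDomain (finRotate 4).symm d =
      Finsupp.equivFunOnFinite.symm ![d 1, d 2, d 3, d 0] := by
  ext i
  rw [Finsupp.equivMapDomain_apply, Equiv.symm_symm]
  fin_cases i <;> simp [finRotate_succ_apply] <;> rfl

lemma sum_w13_0 (d : Fin 4 →₀ ℕ) : ∑ i : Fin 4, (d i : ℤ) * w13 i 0 = 0 := by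
  rw [Fin.sum_univ_four, show w13 0 0 = 0 from rfl, show w13 1 0 = 0 from rfl,
    show w13 2 0 = 0 from rfl, show w13 3 0 = 0 from rfl]
  ring

lemma sum_w13_1 (d : Fin 4 →₀ ℕ) :
    ∑ i : Fin 4, (d i : ℤ) * w13 i 1 = (d 0 : ℤ) + d 1 - d 2 - d 3 := by
  rw [Fin.sum_univ_four, show w13 0 1 = 1 from rfl, show w13 1 1 = 1 from rfl,
    show w13 2 1 = -1 from rfl, show w13 3 1 = -1 from rfl]
  ring

lemma sum_w13_2 (d : Fin 4 →₀ ℕ) :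
    ∑ i : Fin 4, (d i : ℤ) * w13 i 2 = (d 0 : ℤ) - d 1 - d 2 + d 3 := by
  rw [Fin.sum_univ_four, show w13 0 2 = 1 from rfl, show w13 1 2 = -1 from rfl,
    show w13 2 2 = -1 from rfl, show w13 3 2 = 1 from rfl]
  ring

lemma sum_w13_zero {d : Fin 4 →₀ ℕ} (h1 : d 0 = d 2) (h2 : d 1 = d 3) (j : Fin 3) :
    ∑ i : Fin 4, (d i : ℤ) * w13 i j = 0 := by
  fin_cases j
  · exact sum_w13_0 d
  · show ∑ i : Fin 4, (d i : ℤ) * w13 i 1 = 0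
    rw [sum_w13_1 d]; omega
  · show ∑ i : Fin 4, (d i : ℤ) * w13 i 2 = 0
    rw [sum_w13_2 d]; omega

lemma actT_of_lattice {f : PS4} (hlat : ∀ d, ¬(d 0 = d 2 ∧ d 1 = d 3) → f d = 0) :
    ∀ lam : Fin 3 → ℂˣ, actT lam f = f := by
  intro lam
  funext d
  show (∏ j : Fin 3, (lam j : ℂ) ^ (∑ i : Fin 4, (d i : ℤ) * w13 i j)) *
      MvPowerSeries.coeff d f = f d
  by_cases hd : d 0 = d 2 ∧ d 1 = d 3
  · rw [Finset.prod_eq_one fun j _ => by rw [sum_w13_zero hd.1 hd.2 j, zpow_zero], one_mul,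
      MvPowerSeries.coeff_apply]
  · rw [MvPowerSeries.coeff_apply, hlat d hd, mul_zero, (hlat d hd).symm]

lemma actG2_of_lattice {f : PS4} (hlat : ∀ d, ¬(d 0 = d 2 ∧ d 1 = d 3) → f d = 0) :
    actG2 f = f := by
  funext d
  show MvPowerSeries.coeff (Finsupp.equivMapDomain (Equiv.swap (1 : Fin 4) 3) d) f = f d
  rw [swap_E4, MvPowerSeries.coeff_apply]
  by_cases hd : d 0 = d 2 ∧ d 1 = d 3
  · congr 1
    ext i
    fin_cases i <;> simp <;> omega
  · have hz1 : f (Finsupp.equivFunOnFinite.symm ![d 0, d 3, d 2, d 1]) = 0 := by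
      refine hlat _ fun hcon => hd ?_
      exact ⟨hcon.1, hcon.2.symm⟩
    rw [hz1, hlat d hd]

lemma actG3_eval (f : PS4) (d : Fin 4 →₀ ℕ) :
    actG3 f d = (-1 : ℂ) ^ (d 0 + d 1) * f (Finsupp.equivFunOnFinite.symm ![d 1, d 2, d 3, d 0]) := by
  show (-1 : ℂ) ^ (d 0 + d 1) *
      MvPowerSeries.coeff (Finsupp.equivMapDomain (finRotate 4).symm d) f = _
  rw [rot_E4, MvPowerSeries.coeff_apply]

lemma symm_of_actG3 {f : PS4} (hG3 : actG3 f = f) (a b : ℕ) :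
    f (E4 a b) = (-1 : ℂ) ^ (a + b) * f (E4 b a) := by
  have h := congrFun hG3 (E4 a b)
  rw [actG3_eval f (E4 a b)] at h
  exact h.symm

lemma actG3_of_lattice {f : PS4} (hlat : ∀ d, ¬(d 0 = d 2 ∧ d 1 = d 3) → f d = 0)
    (hsym : ∀ a b : ℕ, f (E4 a b) = (-1 : ℂ) ^ (a + b) * f (E4 b a)) : actG3 f = f := by
  funext d
  rw [actG3_eval]
  by_cases hd : d 0 = d 2 ∧ d 1 = d 3
  · obtain ⟨h1, h2⟩ := hd
    have hde : d = E4 (d 0) (d 1) := lattice_eq h1 h2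
    have hX : Finsupp.equivFunOnFinite.symm ![d 1, d 2, d 3, d 0] = E4 (d 1) (d 0) := by
      rw [show d 2 = d 0 from h1.symm, show d 3 = d 1 from h2.symm]
      rfl
    rw [hX]
    conv_rhs => rw [hde]
    rw [hsym (d 0) (d 1)]
  · rw [hlat d hd, hlat _ ?_, mul_zero]
    intro hcon
    exact hd ⟨hcon.2.symm, hcon.1⟩

lemma lattice_of_actT {f : PS4} (hT : ∀ lam : Fin 3 → ℂˣ, actT lam f = f) :
    ∀ d, ¬(d 0 = d 2 ∧ d 1 = d 3) → f d = 0 := by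
  intro d hd
  have key : ∀ j : Fin 3, (∑ i : Fin 4, (d i : ℤ) * w13 i j) ≠ 0 → f d = 0 := by
    intro j hj
    set lam : Fin 3 → ℂˣ := fun j' => if j' = j then Units.mk0 2 two_ne_zero else 1 with hlam
    have h := congrFun (hT lam) d
    have hprod : (∏ j' : Fin 3, ((lam j' : ℂ)) ^ (∑ i : Fin 4, (d i : ℤ) * w13 i j')) =
        (2 : ℂ) ^ (∑ i : Fin 4, (d i : ℤ) * w13 i j) := by
      rw [Finset.prod_eq_single j]
      · rw [hlam]; simp
      · intro j' _ hne; rw [hlam]; simp [hne]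
      · intro habs; exact absurd (Finset.mem_univ j) habs
    rw [show actT lam f d = (∏ j' : Fin 3, ((lam j' : ℂ)) ^
        (∑ i : Fin 4, (d i : ℤ) * w13 i j')) * MvPowerSeries.coeff d f from rfl, hprod,
      MvPowerSeries.coeff_apply] at h
    by_contra hf
    exact unit2_zpow_ne_one hj (mul_right_cancel₀ hf (by rw [h, one_mul]))
  have e1 := sum_w13_1 d
  have e2 := sum_w13_2 d
  have hcase : (∑ i : Fin 4, (d i : ℤ) * w13 i 1) ≠ 0 ∨ (∑ i : Fin 4, (d i : ℤ) * w13 i 2) ≠ 0 := by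
    rw [e1, e2]
    omega
  rcases hcase with h | h
  exacts [key 1 h, key 2 h]

/-- recursive solution of the triangular system -/
def gR (f : PS4) : ℕ → ℕ → ℂ
  | m, n => (-1 : ℂ) ^ n * (f (E4 m (m + n)) -
      ∑ m' ∈ Finset.range m,
        (if h : m' < m then gR f m' (2 * (m - m') + n) * Sc m' m (m + n) else 0))
termination_by m => m
decreasing_by exact h

lemma gR_eq (f : PS4) (m n : ℕ) :
    gR f m n = (-1 : ℂ) ^ n * (f (E4 m (m + n)) -
      ∑ m' ∈ Finset.range m, gR f m' (2 * (m - m') + n) * Sc m' m (m + n)) := by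
  rw [gR]
  congr 2
  refine Finset.sum_congr rfl fun m' hm' => ?_
  rw [dif_pos (Finset.mem_range.mp hm')]

def gSeries (f : PS4) : MvPowerSeries (Fin 2) ℂ := fun e => gR f (e 0) (e 1)

lemma gSeries_apply (f : PS4) (m n : ℕ) : gSeries f (E2 m n) = gR f m n := rfl

lemma PhiFun_gSeries (f : PS4) (a n : ℕ) :
    PhiFun (gSeries f) (E4 a (a + n)) = f (E4 a (a + n)) := by
  rw [PhiFun_formula, show min a (a + n) = a by omega, Finset.sum_range_succ]
  have hmain : ∑ m' ∈ Finset.range a,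
      gSeries f (E2 m' (a + (a + n) - 2 * m')) * Sc m' a (a + n) =
      ∑ m' ∈ Finset.range a, gR f m' (2 * (a - m') + n) * Sc m' a (a + n) := by
    refine Finset.sum_congr rfl fun m' hm' => ?_
    have hlt : m' < a := Finset.mem_range.mp hm'
    rw [gSeries_apply, show a + (a + n) - 2 * m' = 2 * (a - m') + n by omega]
  rw [hmain, show a + (a + n) - 2 * a = n by omega, gSeries_apply]
  have hsc : Sc a a (a + n) = (-1 : ℂ) ^ n := by
    rw [Sc, show a + (a + n) - 2 * a = n by omega, show a - a = 0 by omega,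
      Nat.choose_zero_right]
    simp
  rw [hsc, gR_eq]
  have hpow : ((-1 : ℂ) ^ n) * ((-1 : ℂ) ^ n) = 1 := by
    rw [← pow_add, ← two_mul, pow_mul]
    norm_num
  set S := ∑ m' ∈ Finset.range a, gR f m' (2 * (a - m') + n) * Sc m' a (a + n) with hS
  have hstep : ((-1 : ℂ) ^ n * (f (E4 a (a + n)) - S)) * (-1 : ℂ) ^ n
      = f (E4 a (a + n)) - S := by
    rw [mul_comm, ← mul_assoc, hpow, one_mul]
  rw [hstep]
  ring

lemma PhiFun_gSeries_eq (f : PS4) (hlat : ∀ d, ¬(d 0 = d 2 ∧ d 1 = d 3) → f d = 0)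
    (hsym : ∀ a b : ℕ, f (E4 a b) = (-1 : ℂ) ^ (a + b) * f (E4 b a)) :
    PhiFun (gSeries f) = f := by
  funext d
  by_cases hd : d 0 = d 2 ∧ d 1 = d 3
  · rw [lattice_eq hd.1 hd.2]
    set a := d 0
    set b := d 1
    by_cases hab : a ≤ b
    · have := PhiFun_gSeries f a (b - a)
      rwa [show a + (b - a) = b by omega] at this
    · rw [PhiFun_symm, hsym a b]
      congr 1
      have := PhiFun_gSeries f b (a - b)
      rwa [show b + (a - b) = a by omega] at this
  · rw [PhiFun_nonlattice _ hd, hlat d hd]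

theorem stmt13 :
    ∃ Φ : MvPowerSeries (Fin 2) ℂ →ₐ[ℂ] PS4,
      -- `Φ` sends the two indeterminates to `t_α t_β t_γ t_δ` and `t_α t_γ − t_β t_δ`
      Φ (MvPowerSeries.X 0) =
        MvPowerSeries.X 0 * MvPowerSeries.X 1 * MvPowerSeries.X 2 * MvPowerSeries.X 3 ∧
      Φ (MvPowerSeries.X 1) =
        MvPowerSeries.X 0 * MvPowerSeries.X 2
          - MvPowerSeries.X 1 * MvPowerSeries.X 3 ∧
      -- the two elements are algebraically independent: `Φ` is injective
      Function.Injective Φ ∧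
      -- the ring of `G`-invariants is exactly `ℂ[[t_α t_β t_γ t_δ, t_α t_γ − t_β t_δ]]`
      Set.range Φ =
        {f : PS4 | (∀ lam : Fin 3 → ℂˣ, actT lam f = f) ∧ actG2 f = f ∧ actG3 f = f} := by
  refine ⟨Phi, PhiFun_X0, PhiFun_X1, ?_, ?_⟩
  · intro g h hgh
    have hz : PhiFun (g - h) = 0 := by
      rw [show (PhiFun (g - h) : PS4) = Phi (g - h) from rfl, map_sub]
      rw [show (Phi g : PS4) = Phi h from hgh, sub_self]
    exact sub_eq_zero.mp (PhiFun_eq_zero hz)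
  · ext f
    simp only [Set.mem_range, Set.mem_setOf_eq]
    constructor
    · rintro ⟨g, rfl⟩
      have hlat : ∀ d, ¬(d 0 = d 2 ∧ d 1 = d 3) → (Phi g) d = 0 := fun d hd =>
        PhiFun_nonlattice g hd
      exact ⟨actT_of_lattice hlat, actG2_of_lattice hlat,
        actG3_of_lattice hlat (fun a b => PhiFun_symm g a b)⟩
    · rintro ⟨hT, hG2, hG3⟩
      exact ⟨gSeries f, PhiFun_gSeries_eq f (lattice_of_actT hT) (symm_of_actG3 hG3)⟩
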